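/- The Dipper–Donkin quantized matrix algebra Mat₂(q) is a noetherian domain, and the monomials Z11^a · Z12^b · Z21^c · Z22^d for a, b, c, d ∈ ℕ form a basis of Mat₂(q) as a K-vector space. -/

import Mathlib

noncomputable section

open FreeAlgebra MulOpposite

/-- The relations of the Dipper–Donkin quantized matrix algebra of rank 2:
`Z12·Z11 = Z11·Z12`, `Z21·Z11 = q·Z11·Z21`, `Z22·Z21 = Z21·Z22`, `Z22·Z12 = q·Z12·Z22`,
`Z21·Z12 = q·Z12·Z21`, `Z22·Z11 = Z11·Z22 + (q−1)·Z12·Z21`, where the generators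
`Z11, Z12, Z21, Z22` are the images of `0, 1, 2, 3 : Fin 4`. -/
inductive DDrel {K : Type*} [Field K] (q : K) :
    FreeAlgebra K (Fin 4) → FreeAlgebra K (Fin 4) → Prop
  | r1 : DDrel q (ι K (1 : Fin 4) * ι K (0 : Fin 4)) (ι K (0 : Fin 4) * ι K (1 : Fin 4))
  | r2 : DDrel q (ι K (2 : Fin 4) * ι K (0 : Fin 4)) (q • (ι K (0 : Fin 4) * ι K (2 : Fin 4)))
  | r3 : DDrel q (ι K (3 : Fin 4) * ι K (2 : Fin 4)) (ι K (2 : Fin 4) * ι K (3 : Fin 4))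
  | r4 : DDrel q (ι K (3 : Fin 4) * ι K (1 : Fin 4)) (q • (ι K (1 : Fin 4) * ι K (3 : Fin 4)))
  | r5 : DDrel q (ι K (2 : Fin 4) * ι K (1 : Fin 4)) (q • (ι K (1 : Fin 4) * ι K (2 : Fin 4)))
  | r6 : DDrel q (ι K (3 : Fin 4) * ι K (0 : Fin 4))
      (ι K (0 : Fin 4) * ι K (3 : Fin 4) + (q - 1) • (ι K (1 : Fin 4) * ι K (2 : Fin 4)))

/-- The Dipper–Donkin quantized matrix algebra `Mat₂(q)`: the quotient of the free
`K`-algebra on four generators by the two-sided ideal generated by the relations above. -/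
abbrev DDMat2 {K : Type*} [Field K] (q : K) := RingQuot (DDrel q)

variable {K : Type*} [Field K]

/-- The generator `Z11` of `Mat₂(q)`. -/
def Z11 (q : K) : DDMat2 q := RingQuot.mkAlgHom K (DDrel q) (ι K (0 : Fin 4))
/-- The generator `Z12` of `Mat₂(q)`. -/
def Z12 (q : K) : DDMat2 q := RingQuot.mkAlgHom K (DDrel q) (ι K (1 : Fin 4))
/-- The generator `Z21` of `Mat₂(q)`. -/
def Z21 (q : K) : DDMat2 q := RingQuot.mkAlgHom K (DDrel q) (ι K (2 : Fin 4))
/-- The generator `Z22` of `Mat₂(q)`. -/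
def Z22 (q : K) : DDMat2 q := RingQuot.mkAlgHom K (DDrel q) (ι K (3 : Fin 4))



namespace DDaux

abbrev MI : Type := ℕ × ℕ × ℕ × ℕ

def tm (x : MI) : ℕ ×ₗ (ℕ ×ₗ (ℕ ×ₗ ℕ)) := toLex (x.1, toLex (x.2.1, toLex (x.2.2.1, x.2.2.2)))

theorem tm_lt_iff {x y : MI} : tm x < tm y ↔
    x.1 < y.1 ∨ (x.1 = y.1 ∧ (x.2.1 < y.2.1 ∨ (x.2.1 = y.2.1 ∧
      (x.2.2.1 < y.2.2.1 ∨ (x.2.2.1 = y.2.2.1 ∧ x.2.2.2 < y.2.2.2))))) := by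
  simp [tm, Prod.Lex.lt_iff]

theorem tm_le_iff {x y : MI} : tm x ≤ tm y ↔
    x.1 < y.1 ∨ (x.1 = y.1 ∧ (x.2.1 < y.2.1 ∨ (x.2.1 = y.2.1 ∧
      (x.2.2.1 < y.2.2.1 ∨ (x.2.2.1 = y.2.2.1 ∧ x.2.2.2 ≤ y.2.2.2))))) := by
  simp [tm, Prod.Lex.le_iff, Prod.Lex.lt_iff]

theorem mi_ext_iff {x y : MI} : x = y ↔
    x.1 = y.1 ∧ x.2.1 = y.2.1 ∧ x.2.2.1 = y.2.2.1 ∧ x.2.2.2 = y.2.2.2 := by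
  obtain ⟨a, b, c, d⟩ := x; obtain ⟨a', b', c', d'⟩ := y; simp [Prod.ext_iff]

theorem mi_add_def {x y : MI} : x + y =
    (x.1 + y.1, x.2.1 + y.2.1, x.2.2.1 + y.2.2.1, x.2.2.2 + y.2.2.2) := rfl

theorem mi_le_iff {x y : MI} : x ≤ y ↔
    x.1 ≤ y.1 ∧ x.2.1 ≤ y.2.1 ∧ x.2.2.1 ≤ y.2.2.1 ∧ x.2.2.2 ≤ y.2.2.2 := by
  obtain ⟨a, b, c, d⟩ := x; obtain ⟨a', b', c', d'⟩ := y
  simp [Prod.le_def]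

theorem tm_inj {x y : MI} (h : tm x = tm y) : x = y := by
  have h1 : tm x ≤ tm y := le_of_eq h
  have h2 : tm y ≤ tm x := le_of_eq h.symm
  rw [tm_le_iff] at h1 h2
  rw [mi_ext_iff]; omega

theorem tm_add_lt {x y u v : MI} (h1 : tm x ≤ tm y) (h2 : tm u ≤ tm v)
    (h3 : tm x < tm y ∨ tm u < tm v) : tm (x + u) < tm (y + v) := by
  simp only [tm_le_iff] at h1 h2
  simp only [tm_lt_iff, mi_add_def] at h3 ⊢
  omega

theorem tm_add_le {x y u v : MI} (h1 : tm x ≤ tm y) (h2 : tm u ≤ tm v) :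
    tm (x + u) ≤ tm (y + v) := by
  simp only [tm_le_iff, mi_add_def] at h1 h2 ⊢
  omega

theorem exists_tm_max (s : Finset MI) (hs : s.Nonempty) :
    ∃ μ ∈ s, ∀ ν ∈ s, tm ν ≤ tm μ :=
  s.exists_max_image tm hs

theorem tm_wf : WellFounded (fun x y : MI => tm x < tm y) :=
  InvImage.wf tm wellFounded_lt

theorem prod_lt_tm_lt {x y : MI} (h1 : x ≤ y) (h2 : x ≠ y) : tm x < tm y := by
  rw [mi_le_iff] at h1; rw [Ne, mi_ext_iff] at h2; rw [tm_lt_iff]; omega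

end DDaux


open FreeAlgebra

namespace DDaux

variable {K : Type*} [Field K]

abbrev VS (K : Type*) [Field K] : Type _ := MI →₀ K

def opOf (g : MI → VS K) : VS K →ₗ[K] VS K :=
  Finsupp.lsum K fun A => LinearMap.toSpanSingleton K (VS K) (g A)

@[simp] theorem opOf_single (g : MI → VS K) (A : MI) (k : K) :
    opOf g (Finsupp.single A k) = k • g A := by
  simp [opOf, LinearMap.toSpanSingleton_apply]

def bv (A : MI) : VS K := Finsupp.single A 1

@[simp] theorem opOf_bv (g : MI → VS K) (A : MI) : opOf g (bv A) = g A := by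
  simp [bv]

def gX : MI → VS K := fun A => bv (A.1 + 1, A.2.1, A.2.2.1, A.2.2.2)
def gY : MI → VS K := fun A => bv (A.1, A.2.1 + 1, A.2.2.1, A.2.2.2)
def gZ (q : K) : MI → VS K := fun A =>
  q ^ (A.1 + A.2.1) • bv (A.1, A.2.1, A.2.2.1 + 1, A.2.2.2)
def gW (q : K) : MI → VS K := fun A =>
  q ^ A.2.1 • bv (A.1, A.2.1, A.2.2.1, A.2.2.2 + 1)
  + ((q ^ A.1 - 1) * q ^ A.2.1) • bv (A.1 - 1, A.2.1 + 1, A.2.2.1 + 1, A.2.2.2)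

theorem relYX : (opOf (K := K) gY) * opOf gX = opOf gX * opOf gY := by
  apply Finsupp.lhom_ext; intro A k
  obtain ⟨a, b, c, d⟩ := A
  simp [Module.End.mul_apply, gX, gY, map_smul]

theorem relZX (q : K) : (opOf (gZ q)) * opOf gX = q • (opOf gX * opOf (gZ q)) := by
  apply Finsupp.lhom_ext; intro A k
  obtain ⟨a, b, c, d⟩ := A
  simp [Module.End.mul_apply, gX, gZ, map_smul, smul_smul]
  module

theorem relWZ (q : K) : (opOf (gW q)) * opOf (gZ q) = opOf (gZ q) * opOf (gW q) := by
  apply Finsupp.lhom_ext; intro A k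
  obtain ⟨a, b, c, d⟩ := A
  rcases a with _ | n <;>
    simp [Module.End.mul_apply, gZ, gW, map_smul, smul_smul, map_add] <;> module

theorem relWY (q : K) : (opOf (gW q)) * opOf gY = q • (opOf gY * opOf (gW q)) := by
  apply Finsupp.lhom_ext; intro A k
  obtain ⟨a, b, c, d⟩ := A
  simp [Module.End.mul_apply, gY, gW, map_smul, smul_smul, map_add]
  module

theorem relZY (q : K) : (opOf (gZ q)) * opOf gY = q • (opOf gY * opOf (gZ q)) := by
  apply Finsupp.lhom_ext; intro A k
  obtain ⟨a, b, c, d⟩ := A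
  simp [Module.End.mul_apply, gY, gZ, map_smul, smul_smul]
  module

theorem relWX (q : K) : (opOf (gW q)) * opOf gX
    = opOf gX * opOf (gW q) + (q - 1) • (opOf gY * opOf (gZ q)) := by
  apply Finsupp.lhom_ext; intro A k
  obtain ⟨a, b, c, d⟩ := A
  rcases a with _ | n <;>
    simp [Module.End.mul_apply, gX, gY, gZ, gW, map_smul, smul_smul, map_add] <;>
    module

end DDaux

namespace DDaux

variable {K : Type*} [Field K]

theorem qb1 (q : K) : Z12 q * Z11 q = Z11 q * Z12 q := by
  simpa [Z12, Z11, map_mul] using RingQuot.mkAlgHom_rel K (DDrel.r1 (q := q))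

theorem qb2 (q : K) : Z21 q * Z11 q = q • (Z11 q * Z21 q) := by
  simpa [Z21, Z11, map_mul, map_smul] using RingQuot.mkAlgHom_rel K (DDrel.r2 (q := q))

theorem qb3 (q : K) : Z22 q * Z21 q = Z21 q * Z22 q := by
  simpa [Z22, Z21, map_mul] using RingQuot.mkAlgHom_rel K (DDrel.r3 (q := q))

theorem qb4 (q : K) : Z22 q * Z12 q = q • (Z12 q * Z22 q) := by
  simpa [Z22, Z12, map_mul, map_smul] using RingQuot.mkAlgHom_rel K (DDrel.r4 (q := q))

theorem qb5 (q : K) : Z21 q * Z12 q = q • (Z12 q * Z21 q) := by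
  simpa [Z21, Z12, map_mul, map_smul] using RingQuot.mkAlgHom_rel K (DDrel.r5 (q := q))

theorem qb6 (q : K) : Z22 q * Z11 q = Z11 q * Z22 q + (q - 1) • (Z12 q * Z21 q) := by
  simpa [Z11, Z12, Z21, Z22, map_mul, map_add, map_smul] using
    RingQuot.mkAlgHom_rel K (DDrel.r6 (q := q))

end DDaux

namespace DDaux

variable {K : Type*} [Field K]

/-- generic: if `g * x = κ • (x * g)` then `g * x^n = κ^n • (x^n * g)`. -/
theorem qpow {R : Type*} [Ring R] [Algebra K R] (g x : R) (κ : K)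
    (h : g * x = κ • (x * g)) : ∀ n : ℕ, g * x ^ n = κ ^ n • (x ^ n * g)
  | 0 => by simp
  | (n + 1) => by
    rw [pow_succ, ← mul_assoc, qpow g x κ h n, smul_mul_assoc, mul_assoc, h,
      mul_smul_comm, smul_smul, ← pow_succ, ← mul_assoc, ← pow_succ]

theorem qp1 (q : K) (n : ℕ) : Z12 q * Z11 q ^ n = Z11 q ^ n * Z12 q :=
  ((Commute.pow_right (qb1 q) n)).eq

theorem qp2 (q : K) (n : ℕ) : Z21 q * Z11 q ^ n = q ^ n • (Z11 q ^ n * Z21 q) :=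
  qpow _ _ q (qb2 q) n

theorem qp3 (q : K) (n : ℕ) : Z22 q * Z21 q ^ n = Z21 q ^ n * Z22 q :=
  ((Commute.pow_right (qb3 q) n)).eq

theorem qp4 (q : K) (n : ℕ) : Z22 q * Z12 q ^ n = q ^ n • (Z12 q ^ n * Z22 q) :=
  qpow _ _ q (qb4 q) n

theorem qp5 (q : K) (n : ℕ) : Z21 q * Z12 q ^ n = q ^ n • (Z12 q ^ n * Z21 q) :=
  qpow _ _ q (qb5 q) n

theorem yzx (q : K) : (Z12 q * Z21 q) * Z11 q = q • (Z11 q * (Z12 q * Z21 q)) := by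
  rw [mul_assoc, qb2, mul_smul_comm, ← mul_assoc, qb1, mul_assoc]

theorem qp6 (q : K) : ∀ n : ℕ, Z22 q * Z11 q ^ (n + 1)
    = Z11 q ^ (n + 1) * Z22 q + (q ^ (n + 1) - 1) • (Z11 q ^ n * (Z12 q * Z21 q))
  | 0 => by simpa using qb6 q
  | (n + 1) => by
    rw [pow_succ, ← mul_assoc, qp6 q n, add_mul, smul_mul_assoc, mul_assoc, qb6,
      mul_add, mul_smul_comm, mul_assoc, yzx q, mul_smul_comm, smul_smul,
      ← mul_assoc (Z11 q ^ (n + 1)), ← pow_succ, ← mul_assoc (Z11 q ^ n), ← pow_succ,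
      add_assoc, ← add_smul]
    congr 1
    ring_nf

/-- The monomial `Z11^a * (Z12^b * (Z21^c * Z22^d))`. -/
def mono (q : K) : (ℕ × ℕ × ℕ × ℕ) → DDMat2 q := fun A =>
  Z11 q ^ A.1 * (Z12 q ^ A.2.1 * (Z21 q ^ A.2.2.1 * Z22 q ^ A.2.2.2))

theorem zR (q : K) (b c d : ℕ) : Z21 q * (Z12 q ^ b * (Z21 q ^ c * Z22 q ^ d))
    = q ^ b • (Z12 q ^ b * (Z21 q ^ (c + 1) * Z22 q ^ d)) := by
  rw [← mul_assoc, qp5, smul_mul_assoc, mul_assoc, ← mul_assoc (Z21 q), ← pow_succ']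

theorem wR (q : K) (b c d : ℕ) : Z22 q * (Z12 q ^ b * (Z21 q ^ c * Z22 q ^ d))
    = q ^ b • (Z12 q ^ b * (Z21 q ^ c * Z22 q ^ (d + 1))) := by
  rw [← mul_assoc, qp4, smul_mul_assoc, mul_assoc, ← mul_assoc (Z22 q), qp3,
    mul_assoc, ← pow_succ']

theorem mono_x (q : K) (a b c d : ℕ) :
    Z11 q * mono q (a, b, c, d) = mono q (a + 1, b, c, d) := by
  simp only [mono]
  rw [← mul_assoc, ← pow_succ']

theorem mono_y (q : K) (a b c d : ℕ) :
    Z12 q * mono q (a, b, c, d) = mono q (a, b + 1, c, d) := by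
  simp only [mono]
  rw [← mul_assoc, qp1, mul_assoc, ← mul_assoc (Z12 q), ← pow_succ']

theorem mono_z (q : K) (a b c d : ℕ) :
    Z21 q * mono q (a, b, c, d) = q ^ (a + b) • mono q (a, b, c + 1, d) := by
  simp only [mono]
  rw [← mul_assoc, qp2, smul_mul_assoc, mul_assoc, zR, mul_smul_comm, smul_smul, ← pow_add]

theorem mono_w0 (q : K) (b c d : ℕ) :
    Z22 q * mono q (0, b, c, d) = q ^ b • mono q (0, b, c, d + 1) := by
  simp only [mono, pow_zero, one_mul]
  exact wR q b c d

theorem mono_ws (q : K) (n b c d : ℕ) :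
    Z22 q * mono q (n + 1, b, c, d) = q ^ b • mono q (n + 1, b, c, d + 1)
      + ((q ^ (n + 1) - 1) * q ^ b) • mono q (n, b + 1, c + 1, d) := by
  simp only [mono]
  rw [← mul_assoc, qp6, add_mul, mul_assoc, wR, mul_smul_comm, smul_mul_assoc,
    mul_assoc (Z11 q ^ n), mul_assoc (Z12 q), zR, mul_smul_comm, mul_smul_comm,
    ← mul_assoc (Z12 q), ← pow_succ', smul_smul]

end DDaux

namespace DDaux

variable {K : Type*} [Field K]

def gens (q : K) : Fin 4 → Module.End K (VS K) :=
  ![opOf gX, opOf gY, opOf (gZ q), opOf (gW q)]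

def Fr (q : K) : FreeAlgebra K (Fin 4) →ₐ[K] Module.End K (VS K) :=
  FreeAlgebra.lift K (gens q)

theorem Fr_rel {q : K} : ∀ ⦃x y : FreeAlgebra K (Fin 4)⦄, DDrel q x y → Fr q x = Fr q y := by
  intro x y h
  induction h <;>
    simp only [Fr, gens, map_mul, map_smul, map_add, FreeAlgebra.lift_ι_apply,
      Matrix.cons_val_zero, Matrix.cons_val_one, Matrix.head_cons,
      Matrix.cons_val_two, Matrix.cons_val_three, Matrix.tail_cons]
  exacts [relYX, relZX q, relWZ q, relWY q, relZY q, relWX q]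

def toEnd (q : K) : DDMat2 q →ₐ[K] Module.End K (VS K) :=
  RingQuot.liftAlgHom K ⟨Fr q, Fr_rel⟩

@[simp] theorem toEnd_Z11 (q : K) : toEnd q (Z11 q) = opOf gX := by
  rw [Z11, toEnd, RingQuot.liftAlgHom_mkAlgHom_apply, Fr, FreeAlgebra.lift_ι_apply]; rfl

@[simp] theorem toEnd_Z12 (q : K) : toEnd q (Z12 q) = opOf gY := by
  rw [Z12, toEnd, RingQuot.liftAlgHom_mkAlgHom_apply, Fr, FreeAlgebra.lift_ι_apply]; rfl

@[simp] theorem toEnd_Z21 (q : K) : toEnd q (Z21 q) = opOf (gZ q) := by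
  rw [Z21, toEnd, RingQuot.liftAlgHom_mkAlgHom_apply, Fr, FreeAlgebra.lift_ι_apply]; rfl

@[simp] theorem toEnd_Z22 (q : K) : toEnd q (Z22 q) = opOf (gW q) := by
  rw [Z22, toEnd, RingQuot.liftAlgHom_mkAlgHom_apply, Fr, FreeAlgebra.lift_ι_apply]; rfl

def e0 : VS K := bv (0, 0, 0, 0)

theorem actW (q : K) : ∀ d : ℕ, ((opOf (gW q)) ^ d) (e0 (K := K)) = bv (0, 0, 0, d)
  | 0 => by simp [e0]
  | (d + 1) => by
    rw [pow_succ', Module.End.mul_apply, actW q d]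
    simp [gW]

theorem actZ (q : K) : ∀ c : ℕ, ∀ d : ℕ,
    ((opOf (gZ q)) ^ c) (bv (0, 0, 0, d) : VS K) = bv (0, 0, c, d)
  | 0, d => by simp
  | (c + 1), d => by
    rw [pow_succ', Module.End.mul_apply, actZ q c d]
    simp [gZ]

theorem actY : ∀ b : ℕ, ∀ c d : ℕ,
    ((opOf gY) ^ b) (bv (0, 0, c, d) : VS K) = bv (0, b, c, d)
  | 0, c, d => by simp
  | (b + 1), c, d => by
    rw [pow_succ', Module.End.mul_apply, actY b c d]
    simp [gY]

theorem actX : ∀ a : ℕ, ∀ b c d : ℕ,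
    ((opOf gX) ^ a) (bv (0, b, c, d) : VS K) = bv (a, b, c, d)
  | 0, b, c, d => by simp
  | (a + 1), b, c, d => by
    rw [pow_succ', Module.End.mul_apply, actX a b c d]
    simp [gX]

theorem toEnd_mono (q : K) (A : ℕ × ℕ × ℕ × ℕ) : toEnd q (mono q A) e0 = bv A := by
  obtain ⟨a, b, c, d⟩ := A
  simp only [mono, map_mul, map_pow, toEnd_Z11, toEnd_Z12, toEnd_Z21, toEnd_Z22,
    Module.End.mul_apply]
  rw [actW, actZ, actY, actX]

def evl (q : K) : DDMat2 q →ₗ[K] VS K where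
  toFun := fun u => toEnd q u e0
  map_add' := by intro u v; simp [map_add]
  map_smul' := by intro k u; simp [map_smul]

theorem evl_apply (q : K) (u : DDMat2 q) : evl q u = toEnd q u e0 := rfl

theorem evl_mul (q : K) (u v : DDMat2 q) : evl q (u * v) = toEnd q u (evl q v) := by
  simp [evl, map_mul, Module.End.mul_apply]

def mtot (q : K) : VS K →ₗ[K] DDMat2 q :=
  Finsupp.lsum K fun A => LinearMap.toSpanSingleton K _ (mono q A)

@[simp] theorem mtot_single (q : K) (A : ℕ × ℕ × ℕ × ℕ) (k : K) :
    mtot q (Finsupp.single A k) = k • mono q A := by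
  simp [mtot, LinearMap.toSpanSingleton_apply]

theorem mtot_bv (q : K) (A : ℕ × ℕ × ℕ × ℕ) : mtot q (bv A) = mono q A := by
  simp [bv]

theorem evl_mtot (q : K) (v : VS K) : evl q (mtot q v) = v := by
  have h : (evl q).comp (mtot q) = LinearMap.id := by
    apply Finsupp.lhom_ext; intro A k
    simp only [LinearMap.comp_apply, mtot_single, map_smul, LinearMap.id_apply]
    rw [evl_apply, toEnd_mono]
    simp [bv, Finsupp.smul_single]
  exact LinearMap.congr_fun h v

theorem mtot_inj (q : K) : Function.Injective (mtot q) :=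
  Function.LeftInverse.injective (g := evl q) (evl_mtot q)

theorem mono_one (q : K) : mono q (0, 0, 0, 0) = 1 := by simp [mono]

def SP (q : K) : Submodule K (DDMat2 q) := Submodule.span K (Set.range (mono q))

theorem mono_mem_SP (q : K) (A : ℕ × ℕ × ℕ × ℕ) : mono q A ∈ SP q :=
  Submodule.subset_span ⟨A, rfl⟩

theorem key_mul (q : K) (g : DDMat2 q) (hg : ∀ A, g * mono q A ∈ SP q) :
    ∀ s ∈ SP q, g * s ∈ SP q := by
  intro s hs
  have h : SP q ≤ (SP q).comap (LinearMap.mulLeft K g) := by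
    rw [SP, Submodule.span_le]
    rintro _ ⟨A, rfl⟩
    exact hg A
  exact h hs

theorem mk_mul_mem (q : K) (f : FreeAlgebra K (Fin 4)) :
    ∀ s ∈ SP q, (RingQuot.mkAlgHom K (DDrel q) f) * s ∈ SP q := by
  induction f using FreeAlgebra.induction with
  | grade0 r =>
    intro s hs
    rw [AlgHom.commutes, ← Algebra.smul_def]
    exact (SP q).smul_mem r hs
  | grade1 i =>
    refine fun s hs => key_mul q _ ?_ s hs
    intro A
    obtain ⟨a, b, c, d⟩ := A
    fin_cases i
    · show RingQuot.mkAlgHom K (DDrel q) (ι K (0 : Fin 4)) * mono q (a, b, c, d) ∈ SP q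
      rw [show RingQuot.mkAlgHom K (DDrel q) (ι K (0 : Fin 4)) = Z11 q from rfl, mono_x]
      exact mono_mem_SP q _
    · show RingQuot.mkAlgHom K (DDrel q) (ι K (1 : Fin 4)) * mono q (a, b, c, d) ∈ SP q
      rw [show RingQuot.mkAlgHom K (DDrel q) (ι K (1 : Fin 4)) = Z12 q from rfl, mono_y]
      exact mono_mem_SP q _
    · show RingQuot.mkAlgHom K (DDrel q) (ι K (2 : Fin 4)) * mono q (a, b, c, d) ∈ SP q
      rw [show RingQuot.mkAlgHom K (DDrel q) (ι K (2 : Fin 4)) = Z21 q from rfl, mono_z]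
      exact (SP q).smul_mem _ (mono_mem_SP q _)
    · show RingQuot.mkAlgHom K (DDrel q) (ι K (3 : Fin 4)) * mono q (a, b, c, d) ∈ SP q
      rw [show RingQuot.mkAlgHom K (DDrel q) (ι K (3 : Fin 4)) = Z22 q from rfl]
      rcases a with _ | n
      · rw [mono_w0]
        exact (SP q).smul_mem _ (mono_mem_SP q _)
      · rw [mono_ws]
        exact add_mem ((SP q).smul_mem _ (mono_mem_SP q _))
          ((SP q).smul_mem _ (mono_mem_SP q _))
  | mul f g hf hg =>
    intro s hs
    rw [map_mul, mul_assoc]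
    exact hf _ (hg s hs)
  | add f g hf hg =>
    intro s hs
    rw [map_add, add_mul]
    exact add_mem (hf s hs) (hg s hs)

theorem mem_SP (q : K) (u : DDMat2 q) : u ∈ SP q := by
  obtain ⟨f, rfl⟩ := RingQuot.mkAlgHom_surjective K (DDrel q) u
  have h1 : (1 : DDMat2 q) ∈ SP q := by
    rw [← mono_one q]; exact mono_mem_SP q _
  simpa using mk_mul_mem q f 1 h1

theorem mtot_surj (q : K) : Function.Surjective (mtot q) := by
  intro u
  have h : SP q ≤ LinearMap.range (mtot q) := by
    rw [SP, Submodule.span_le]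
    rintro _ ⟨A, rfl⟩
    exact ⟨bv A, mtot_bv q A⟩
  obtain ⟨v, hv⟩ := h (mem_SP q u)
  exact ⟨v, hv⟩

def EE (q : K) : VS K ≃ₗ[K] DDMat2 q :=
  LinearEquiv.ofBijective (mtot q) ⟨mtot_inj q, mtot_surj q⟩

def Bas (q : K) : Module.Basis (ℕ × ℕ × ℕ × ℕ) K (DDMat2 q) := Module.Basis.ofRepr (EE q).symm

theorem Bas_apply (q : K) (A : ℕ × ℕ × ℕ × ℕ) : Bas q A = mono q A := by
  rw [Bas, Module.Basis.coe_ofRepr]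
  show (EE q).symm.symm (Finsupp.single A 1) = mono q A
  rw [LinearEquiv.symm_symm]
  show mtot q (Finsupp.single A 1) = mono q A
  rw [mtot_single, one_smul]

theorem evl_inj (q : K) {u : DDMat2 q} (h : evl q u = 0) : u = 0 := by
  obtain ⟨v, rfl⟩ := mtot_surj q u
  rw [evl_mtot] at h
  rw [h, map_zero]

end DDaux

namespace DDaux

variable {K : Type*} [Field K]

/-- Submodule of elements supported on indices `≤ C` in the lex order. -/
def wle (C : MI) : Submodule K (VS K) where
  carrier := {v | ∀ ν : MI, tm C < tm ν → v ν = 0}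
  add_mem' := fun hu hv ν hν => by simp [Finsupp.add_apply, hu ν hν, hv ν hν]
  zero_mem' := fun ν _ => rfl
  smul_mem' := fun k v hv ν hν => by simp [Finsupp.smul_apply, hv ν hν]

theorem mem_wle {C : MI} {v : VS K} : v ∈ wle C ↔ ∀ ν : MI, tm C < tm ν → v ν = 0 :=
  Iff.rfl

theorem bv_mem_wle (A : MI) : (bv A : VS K) ∈ wle A := by
  intro ν hν
  exact Finsupp.single_eq_of_ne (fun h => absurd (h ▸ hν) (lt_irrefl _))

theorem wle_mono {C C' : MI} (h : tm C ≤ tm C') : wle (K := K) C ≤ wle C' :=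
  fun _ hv ν hν => hv ν (lt_of_le_of_lt h hν)

theorem supp_le_of_mem_wle {C : MI} {v : VS K} (hv : v ∈ wle C) {B : MI} (hB : v B ≠ 0) :
    tm B ≤ tm C := by
  by_contra h
  exact hB (hv B (not_le.mp h))

theorem opOf_apply_coeff (g : MI → VS K) (v : VS K) (ν : MI) :
    (opOf g v) ν = ∑ B ∈ v.support, v B * (g B) ν := by
  rw [opOf, Finsupp.lsum_apply, Finsupp.sum, Finsupp.finset_sum_apply]
  refine Finset.sum_congr rfl fun B _ => ?_
  simp [LinearMap.toSpanSingleton_apply]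

/-- A "good" generator family: `g B` is supported `≤ B + δ` with top coefficient `κ B`. -/
def good (g : MI → VS K) (δ : MI) (κ : MI → K) : Prop :=
  ∀ B, g B ∈ wle (B + δ) ∧ (g B) (B + δ) = κ B

def dX : MI := (1, 0, 0, 0)
def dY : MI := (0, 1, 0, 0)
def dZ : MI := (0, 0, 1, 0)
def dW : MI := (0, 0, 0, 1)

theorem goodX : good (gX (K := K)) dX fun _ => 1 := by
  intro B
  obtain ⟨a, b, c, d⟩ := B
  constructor
  · exact bv_mem_wle _
  · exact Finsupp.single_eq_same

theorem goodY : good (gY (K := K)) dY fun _ => 1 := by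
  intro B
  obtain ⟨a, b, c, d⟩ := B
  exact ⟨bv_mem_wle _, Finsupp.single_eq_same⟩

theorem goodZ (q : K) : good (gZ q) dZ fun B => q ^ (B.1 + B.2.1) := by
  intro B
  obtain ⟨a, b, c, d⟩ := B
  constructor
  · exact (wle _).smul_mem _ (bv_mem_wle _)
  · show (q ^ (a + b) • (bv (a, b, c + 1, d) : VS K)) (a, b, c + 1, d) = q ^ (a + b)
    simp [bv]

theorem goodW (q : K) : good (gW q) dW fun B => q ^ B.2.1 := by
  intro B
  obtain ⟨a, b, c, d⟩ := B
  have hadd : ((a, b, c, d) : MI) + dW = (a, b, c, d + 1) := rfl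
  constructor
  · rw [hadd]
    refine (wle _).add_mem ((wle _).smul_mem _ (bv_mem_wle _)) ?_
    rcases a with _ | n
    · show ((q ^ (0 : ℕ) - 1) * q ^ b) • (bv (0 - 1, b + 1, c + 1, d) : VS K) ∈ _
      simp
    · refine (wle _).smul_mem _ (wle_mono ?_ (bv_mem_wle _))
      rw [tm_le_iff]
      simp
  · rw [hadd]
    show (q ^ b • (bv (a, b, c, d + 1) : VS K)
        + ((q ^ a - 1) * q ^ b) • (bv (a - 1, b + 1, c + 1, d) : VS K)) (a, b, c, d + 1)
        = q ^ b
    rcases a with _ | n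
    · simp [bv]
    · rw [Finsupp.add_apply]
      have hne : ((n + 1 - 1, b + 1, c + 1, d) : MI) ≠ (n + 1, b, c, d + 1) := by
        rw [Ne, mi_ext_iff]; simp
      simp [bv, Finsupp.single_eq_of_ne hne]

theorem good_step {g : MI → VS K} {δ : MI} {κ : MI → K} (hg : good g δ κ)
    {v : VS K} {C : MI} (hv : v ∈ wle C) :
    opOf g v ∈ wle (C + δ) ∧ (opOf g v) (C + δ) = κ C * v C := by
  constructor
  · intro ν hν
    rw [opOf_apply_coeff]
    refine Finset.sum_eq_zero fun B hB => ?_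
    have hBC : tm B ≤ tm C := supp_le_of_mem_wle hv (Finsupp.mem_support_iff.mp hB)
    have h0 : (g B) ν = 0 := (hg B).1 ν (lt_of_le_of_lt (tm_add_le hBC le_rfl) hν)
    rw [h0, mul_zero]
  · rw [opOf_apply_coeff]
    rw [Finset.sum_eq_single C ?h₀ ?h₁]
    · rw [(hg C).2]; ring
    case h₁ => intro h; rw [Finsupp.notMem_support_iff.mp h, zero_mul]
    case h₀ =>
      intro B hB hBC
      have h1 : tm B ≤ tm C := supp_le_of_mem_wle hv (Finsupp.mem_support_iff.mp hB)
      have h2 : tm B < tm C := lt_of_le_of_ne h1 fun h => hBC (tm_inj h)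
      have h0 : (g B) (C + δ) = 0 :=
        (hg B).1 _ (tm_add_lt h1 le_rfl (Or.inl h2))
      rw [h0, mul_zero]

theorem mi_smul (n : ℕ) (δ : MI) :
    n • δ = (n * δ.1, n * δ.2.1, n * δ.2.2.1, n * δ.2.2.2) := by
  induction n with
  | zero => rw [zero_nsmul, mi_ext_iff]; simp
  | succ m ih =>
    rw [succ_nsmul, ih, mi_ext_iff, mi_add_def]
    simp [Nat.succ_mul]

theorem good_pow {g : MI → VS K} {δ : MI} {κ : MI → K} (hg : good g δ κ)
    (hκ : ∀ B, κ B ≠ 0) :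
    ∀ (n : ℕ) {v : VS K} {C : MI}, v ∈ wle C →
      ((opOf g ^ n : Module.End K (VS K)) v ∈ wle (n • δ + C) ∧
        ∃ κ' : K, κ' ≠ 0 ∧ ((opOf g ^ n : Module.End K (VS K)) v) (n • δ + C) = κ' * v C)
  | 0, v, C, hv => by
    rw [pow_zero, zero_nsmul, zero_add]
    exact ⟨hv, 1, one_ne_zero, by simp⟩
  | (n + 1), v, C, hv => by
    obtain ⟨hmem, κ', hκ', hval⟩ := good_pow hg hκ n hv
    have st := good_step hg (v := (opOf g ^ n : Module.End K (VS K)) v)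
      (C := n • δ + C) hmem
    have hidx : (n • δ + C) + δ = (n + 1) • δ + C := by
      rw [mi_smul, mi_smul, mi_ext_iff, mi_add_def, mi_add_def, mi_add_def]
      simp [Nat.succ_mul]
      omega
    have happ : ((opOf g ^ (n + 1) : Module.End K (VS K)) v)
        = opOf g ((opOf g ^ n : Module.End K (VS K)) v) := by
      rw [pow_succ', Module.End.mul_apply]
    constructor
    · rw [happ, ← hidx]; exact st.1
    · refine ⟨κ (n • δ + C) * κ', mul_ne_zero (hκ _) hκ', ?_⟩
      rw [happ, ← hidx, st.2, hval, mul_assoc]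

theorem mono_top (q : K) (hq : q ≠ 0) (A : MI) {v : VS K} {C : MI} (hv : v ∈ wle C) :
    toEnd q (mono q A) v ∈ wle (A + C) ∧
      ∃ κ' : K, κ' ≠ 0 ∧ (toEnd q (mono q A) v) (A + C) = κ' * v C := by
  obtain ⟨a, b, c, d⟩ := A
  have hW := good_pow (goodW q) (fun B => pow_ne_zero _ hq) d hv
  obtain ⟨hWm, κW, hκW, hWv⟩ := hW
  have hZ := good_pow (goodZ q) (fun B => pow_ne_zero _ hq) c hWm
  obtain ⟨hZm, κZ, hκZ, hZv⟩ := hZ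
  have hY := good_pow (goodY (K := K)) (fun _ => one_ne_zero) b hZm
  obtain ⟨hYm, κY, hκY, hYv⟩ := hY
  have hX := good_pow (goodX (K := K)) (fun _ => one_ne_zero) a hYm
  obtain ⟨hXm, κX, hκX, hXv⟩ := hX
  have hidx : a • dX + (b • dY + (c • dZ + (d • dW + C))) = ((a, b, c, d) : MI) + C := by
    rw [mi_smul, mi_smul, mi_smul, mi_smul, mi_ext_iff]
    simp [mi_add_def, dX, dY, dZ, dW]
  have happ : toEnd q (mono q (a, b, c, d)) v
      = (opOf gX ^ a : Module.End K (VS K))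
        ((opOf gY ^ b : Module.End K (VS K))
          ((opOf (gZ q) ^ c : Module.End K (VS K))
            ((opOf (gW q) ^ d : Module.End K (VS K)) v))) := by
    simp only [mono, map_mul, map_pow, toEnd_Z11, toEnd_Z12, toEnd_Z21, toEnd_Z22,
      Module.End.mul_apply]
  constructor
  · rw [happ, ← hidx]
    exact hXm
  · refine ⟨κX * (κY * (κZ * κW)),
      mul_ne_zero hκX (mul_ne_zero hκY (mul_ne_zero hκZ hκW)), ?_⟩
    rw [happ, ← hidx, hXv, hYv, hZv, hWv]
    ring

end DDaux

namespace DDaux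

variable {K : Type*} [Field K]

theorem mtot_evl (q : K) (u : DDMat2 q) : mtot q (evl q u) = u := by
  obtain ⟨v, rfl⟩ := mtot_surj q u
  rw [evl_mtot]

theorem evl_ne_zero (q : K) {u : DDMat2 q} (hu : u ≠ 0) : evl q u ≠ 0 :=
  fun h => hu (evl_inj q h)

theorem mtot_eq_sum (q : K) (w : VS K) :
    mtot q w = ∑ A ∈ w.support, w A • mono q A := by
  rw [mtot, Finsupp.lsum_apply, Finsupp.sum]
  exact Finset.sum_congr rfl fun A _ => by simp [LinearMap.toSpanSingleton_apply]

theorem evl_mul_eq_sum (q : K) (u v : DDMat2 q) :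
    evl q (u * v) = ∑ A ∈ (evl q u).support,
      (evl q u) A • toEnd q (mono q A) (evl q v) := by
  rw [evl_mul]
  conv_lhs => rw [← mtot_evl q u]
  rw [mtot_eq_sum, map_sum]
  rw [LinearMap.coe_sum, Finset.sum_apply]
  refine Finset.sum_congr rfl fun A _ => ?_
  rw [map_smul, LinearMap.smul_apply]

theorem max_wle (q : K) {u : DDMat2 q} {μ : MI}
    (hmax : ∀ ν ∈ (evl q u).support, tm ν ≤ tm μ) : evl q u ∈ wle μ := by
  intro ν hν
  by_contra h
  exact absurd (hmax ν (Finsupp.mem_support_iff.mpr h)) (not_le.mpr hν)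

theorem dd_mul_ne_zero (q : K) (hq : q ≠ 0) {u v : DDMat2 q}
    (hu : u ≠ 0) (hv : v ≠ 0) : u * v ≠ 0 := by
  have hu' := evl_ne_zero q hu
  have hv' := evl_ne_zero q hv
  obtain ⟨A, hA, hAmax⟩ := exists_tm_max _ (Finsupp.support_nonempty_iff.mpr hu')
  obtain ⟨C, hC, hCmax⟩ := exists_tm_max _ (Finsupp.support_nonempty_iff.mpr hv')
  have hvwle : evl q v ∈ wle C := max_wle q hCmax
  intro h0
  have hz : evl q (u * v) (A + C) = 0 := by rw [h0, map_zero]; rfl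
  rw [evl_mul_eq_sum, Finsupp.finset_sum_apply] at hz
  rw [Finset.sum_eq_single A ?h₀ ?h₁] at hz
  case h₁ => intro h; exact absurd hA h
  case h₀ =>
    intro B hB hBA
    have h1 : tm B ≤ tm A := hAmax B hB
    have h2 : tm B < tm A := lt_of_le_of_ne h1 fun h => hBA (tm_inj h)
    have h3 := (mono_top q hq B hvwle).1
    rw [Finsupp.smul_apply, h3 (A + C) (tm_add_lt h1 le_rfl (Or.inl h2)), smul_zero]
  obtain ⟨κ, hκ, hκval⟩ := (mono_top q hq A hvwle).2
  rw [Finsupp.smul_apply, hκval, smul_eq_mul] at hz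
  have hA0 : (evl q u) A ≠ 0 := Finsupp.mem_support_iff.mp hA
  have hC0 : (evl q v) C ≠ 0 := Finsupp.mem_support_iff.mp hC
  exact (mul_ne_zero hA0 (mul_ne_zero hκ hC0)) hz

theorem dd_one_ne_zero (q : K) : (1 : DDMat2 q) ≠ 0 := by
  intro h
  have h1 : evl q 1 = bv (0, 0, 0, 0) := by
    rw [evl_apply, map_one]
    rfl
  rw [h, map_zero] at h1
  have h2 := congrArg (fun w : VS K => w ((0, 0, 0, 0) : MI)) h1
  simp [bv] at h2

end DDaux

namespace DDaux

variable {K : Type*} [Field K]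

theorem dd_fg (q : K) (hq : q ≠ 0) (I : Ideal (DDMat2 q)) : I.FG := by
  classical
  set L : Set MI := {μ | ∃ f ∈ I, evl q f μ ≠ 0 ∧ evl q f ∈ wle μ} with hL
  set Lmin : Set MI := {μ ∈ L | ∀ ν ∈ L, ν ≤ μ → ν = μ} with hLmin
  have hpwo : (Set.univ : Set MI).IsPWO := by
    have h1 : (Set.univ : Set ℕ).IsPWO := (Set.isWF_univ_iff.mpr inferInstance).isPWO
    rw [← Set.univ_prod_univ]
    refine h1.prod ?_
    rw [← Set.univ_prod_univ]
    refine h1.prod ?_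
    rw [← Set.univ_prod_univ]
    exact h1.prod h1
  have hanti : IsAntichain (· ≤ ·) Lmin := fun μ hμ ν hν hne hle => hne (hν.2 μ hμ.1 hle)
  have hfin : Lmin.Finite :=
    hanti.finite_of_partiallyWellOrderedOn (hpwo.mono (Set.subset_univ _))
  have hwfp : WellFounded ((· < ·) : MI → MI → Prop) :=
    Subrelation.wf (fun {x y} h => prod_lt_tm_lt h.le h.ne) tm_wf
  have hcov : ∀ μ ∈ L, ∃ ν ∈ Lmin, ν ≤ μ := by
    intro μ hμ
    obtain ⟨ν, hν, hmin⟩ := hwfp.has_min {ν ∈ L | ν ≤ μ} ⟨μ, hμ, le_rfl⟩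
    refine ⟨ν, ⟨hν.1, fun ρ hρ hle => ?_⟩, hν.2⟩
    by_contra hne
    exact hmin ρ ⟨hρ, hle.trans hν.2⟩ (lt_of_le_of_ne hle hne)
  have hsel : ∀ μ ∈ L, ∃ f, f ∈ I ∧ evl q f μ ≠ 0 ∧ evl q f ∈ wle μ := fun μ hμ => hμ
  choose! sel hsel1 hsel2 hsel3 using hsel
  set G : Set (DDMat2 q) := sel '' Lmin with hG
  have hGfin : G.Finite := hfin.image _
  set J : Ideal (DDMat2 q) := Ideal.span G with hJ
  have hJI : J ≤ I := Ideal.span_le.mpr (by rintro _ ⟨μ, hμ, rfl⟩; exact hsel1 μ hμ.1)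
  have main : ∀ t : ℕ ×ₗ (ℕ ×ₗ (ℕ ×ₗ ℕ)), ∀ g ∈ I,
      (∀ ν : MI, evl q g ν ≠ 0 → tm ν < t) → g ∈ J := by
    intro t
    refine wellFounded_lt.induction
      (C := fun t => ∀ g ∈ I, (∀ ν : MI, evl q g ν ≠ 0 → tm ν < t) → g ∈ J) t ?_
    intro t IH g hgI hgt
    by_cases hg0 : g = 0
    · rw [hg0]; exact J.zero_mem
    have hg' : evl q g ≠ 0 := evl_ne_zero q hg0
    obtain ⟨μ, hμs, hμmax⟩ := exists_tm_max _ (Finsupp.support_nonempty_iff.mpr hg')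
    have hgwle : evl q g ∈ wle μ := max_wle q hμmax
    have hμL : μ ∈ L := ⟨g, hgI, Finsupp.mem_support_iff.mp hμs, hgwle⟩
    obtain ⟨μ₀, hμ₀min, hμ₀le⟩ := hcov μ hμL
    have hμ₀L : μ₀ ∈ L := hμ₀min.1
    set A : MI := (μ.1 - μ₀.1, μ.2.1 - μ₀.2.1, μ.2.2.1 - μ₀.2.2.1, μ.2.2.2 - μ₀.2.2.2)
      with hAdef
    have hAadd : A + μ₀ = μ := by
      rw [mi_le_iff] at hμ₀le
      rw [mi_ext_iff, mi_add_def]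
      simp only [hAdef]
      omega
    obtain ⟨hfm, hex⟩ := mono_top q hq A (hsel3 μ₀ hμ₀L)
    obtain ⟨κ, hκ, hκval⟩ := hex
    rw [hAadd] at hfm hκval
    set c : K := evl q g μ / (κ * evl q (sel μ₀) μ₀) with hc
    set g' : DDMat2 q := g - c • (mono q A * sel μ₀) with hg'def
    have hg'I : g' ∈ I := by
      refine I.sub_mem hgI ?_
      rw [Algebra.smul_def]
      exact I.mul_mem_left _ (I.mul_mem_left _ (hsel1 μ₀ hμ₀L))
    have hevg' : evl q g' = evl q g - c • toEnd q (mono q A) (evl q (sel μ₀)) := by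
      rw [hg'def, map_sub, map_smul, evl_mul]
    have hg'supp : ∀ ν : MI, evl q g' ν ≠ 0 → tm ν < tm μ := by
      intro ν hν
      rcases lt_trichotomy (tm ν) (tm μ) with h | h | h
      · exact h
      · exfalso
        apply hν
        have hνμ : ν = μ := tm_inj h
        rw [hevg', hνμ, Finsupp.sub_apply, Finsupp.smul_apply, hκval, smul_eq_mul, hc,
          div_mul_cancel₀ _ (mul_ne_zero hκ (hsel2 μ₀ hμ₀L)), sub_self]
      · exfalso
        apply hν
        rw [hevg', Finsupp.sub_apply, Finsupp.smul_apply, hgwle ν h, hfm ν h, smul_zero,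
          sub_self]
    have hg'J : g' ∈ J := IH (tm μ) (hgt μ (Finsupp.mem_support_iff.mp hμs)) g' hg'I hg'supp
    have hgeq : g = g' + c • (mono q A * sel μ₀) := by rw [hg'def, sub_add_cancel]
    rw [hgeq]
    refine J.add_mem hg'J ?_
    rw [Algebra.smul_def]
    exact J.mul_mem_left _ (J.mul_mem_left _ (Ideal.subset_span ⟨μ₀, hμ₀min, rfl⟩))
  have hIJ : I ≤ J := by
    intro g hg
    by_cases hg0 : g = 0
    · rw [hg0]; exact J.zero_mem
    obtain ⟨μ, hμs, hμmax⟩ :=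
      exists_tm_max _ (Finsupp.support_nonempty_iff.mpr (evl_ne_zero q hg0))
    refine main (tm (μ + dX)) g hg fun ν hν => ?_
    calc tm ν ≤ tm μ := hμmax ν (Finsupp.mem_support_iff.mpr hν)
      _ < tm (μ + dX) := by rw [tm_lt_iff]; simp [mi_add_def, dX]
  exact ⟨hGfin.toFinset, by rw [Set.Finite.coe_toFinset]; exact le_antisymm hJI hIJ⟩

end DDaux

/-- The Dipper–Donkin quantized matrix algebra `Mat₂(q)` is a noetherian
domain, and the monomials `Z11^a * Z12^b * Z21^c * Z22^d`, for `a b c d : ℕ`, form a basis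
of `Mat₂(q)` as a `K`-vector space. -/
theorem DDMat2_noetherian_domain_and_monomial_basis (q : K) (hq : q ≠ 0) :
    IsNoetherianRing (DDMat2 q) ∧ IsDomain (DDMat2 q) ∧
      ∃ B : Module.Basis (ℕ × ℕ × ℕ × ℕ) K (DDMat2 q),
        ∀ a b c d : ℕ, B (a, b, c, d) = Z11 q ^ a * Z12 q ^ b * Z21 q ^ c * Z22 q ^ d := by
  refine ⟨?_, ?_, ?_⟩
  · rw [isNoetherianRing_iff_ideal_fg]
    exact fun I => DDaux.dd_fg q hq I
  · have h1 : Nontrivial (DDMat2 q) := nontrivial_of_ne 1 0 (DDaux.dd_one_ne_zero q)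
    have h2 : NoZeroDivisors (DDMat2 q) :=
      { eq_zero_or_eq_zero_of_mul_eq_zero := fun {a b} hab => by
          by_contra hcon
          push_neg at hcon
          exact DDaux.dd_mul_ne_zero q hq hcon.1 hcon.2 hab }
    exact NoZeroDivisors.to_isDomain _
  · refine ⟨DDaux.Bas q, fun a b c d => ?_⟩
    rw [DDaux.Bas_apply]
    simp [DDaux.mono, mul_assoc]
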